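/- Let B be a width-3 ROBP with two vertices v_{1,1}, v_{1,2} in its first layer, at most ℓ colliding layers, and suppose there exists an input string on which the two computation paths starting from v_{1,1} and v_{1,2} collide. Let u be the first vertex at which a collision can occur, and let E be the event that a collision happens at u. Then the indicator of E can be computed by a width-3 ROBP with at most ℓ colliding layers. -/
import Mathlib


open Finset

/-- Uniform-distribution expectation of `f` over a finite type. -/
noncomputable def uexp {α : Type*} [Fintype α] (f : α → ℝ) : ℝ :=
  (∑ x : α, f x) / (Fintype.card α : ℝ)

/-- Variance under the uniform distribution. -/
noncomputable def uvar {α : Type*} [Fintype α] (f : α → ℝ) : ℝ :=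
  uexp (fun x => f x ^ 2) - (uexp f) ^ 2

open Classical in
/-- Real-valued indicator of a proposition. -/
noncomputable def ind (P : Prop) : ℝ := if P then 1 else 0

/-- `sel T x y` agrees with `x` on `T` and with `y` outside of `T`. -/
def sel {n : ℕ} (T : Finset (Fin n)) (x y : Fin n → Bool) : Fin n → Bool :=
  fun i => if i ∈ T then x i else y i

/-- The bias function of `f` with respect to the set `T` of live coordinates. -/
noncomputable def biasFn {n : ℕ} (T : Finset (Fin n)) (f : (Fin n → Bool) → ℝ) :
    (Fin n → Bool) → ℝ :=
  fun x => uexp (fun y : Fin n → Bool => f (sel T x y))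

/-- A layered read-once branching program of width `w` and length `n`.
`V i` is the set of vertices of layer `i`; the Boolean `true` corresponds to the
edge label `1` and `false` to the edge label `-1`; the program outputs `-1` iff it
accepts. -/
structure ROBP (w n : ℕ) where
  V : Fin (n + 1) → Finset (Fin w)
  V_nonempty : ∀ i, (V i).Nonempty
  start : Fin w
  start_mem : start ∈ V 0
  trans : Fin n → Bool → Fin w → Fin w
  trans_mem : ∀ (i : Fin n) (b : Bool) (v : Fin w), v ∈ V i.castSucc → trans i b v ∈ V i.succ
  accept : Fin w → Bool

namespace ROBP

variable {w n : ℕ}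

/-- The state reached at layer `j` when starting from state `v` at layer `i`. -/
def runTo (B : ROBP w n) (x : Fin n → Bool) (v : Fin w) (i j : ℕ) : Fin w :=
  if h : i < j ∧ i < n then runTo B x (B.trans ⟨i, h.2⟩ (x ⟨i, h.2⟩) v) (i + 1) j else v
termination_by j - i
decreasing_by omega

/-- The final state on input `x`, starting from the start vertex. -/
def run (B : ROBP w n) (x : Fin n → Bool) : Fin w := B.runTo x B.start 0 n

/-- The `±1` value computed by `B` on `x` (`-1` means accept). -/
noncomputable def eval (B : ROBP w n) (x : Fin n → Bool) : ℝ :=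
  if B.accept (B.run x) then -1 else 1

/-- Probability (over a uniformly random input) of reaching vertex `v` at layer `j`. -/
noncomputable def reachProb (B : ROBP w n) (j : ℕ) (v : Fin w) : ℝ :=
  uexp (fun x : Fin n → Bool => if B.runTo x B.start 0 j = v then (1 : ℝ) else 0)

/-- Acceptance probability starting from vertex `v` at layer `i`, on a uniform input. -/
noncomputable def beta (B : ROBP w n) (i : ℕ) (v : Fin w) : ℝ :=
  uexp (fun x : Fin n → Bool => if B.accept (B.runTo x v i n) then (1 : ℝ) else 0)

/-- Layer `i` of edges is colliding: two distinct vertices of layer `i` have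
equally-labeled edges entering the same vertex of layer `i+1`. -/
def Colliding (B : ROBP w n) (i : Fin n) : Prop :=
  ∃ (b : Bool) (u v : Fin w), u ∈ B.V i.castSucc ∧ v ∈ B.V i.castSucc ∧ u ≠ v ∧
    B.trans i b u = B.trans i b v

/-- The number of colliding layers of `B`. -/
noncomputable def collidingCount (B : ROBP w n) : ℕ :=
  Nat.card {i : Fin n // B.Colliding i}

/-- The value of `B` on `x` when all vertices of `V 0` are interpreted as start
vertices: the average of the `±1` outcomes of the corresponding computation paths. -/
noncomputable def avgEval (B : ROBP w n) (x : Fin n → Bool) : ℝ :=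
  (∑ v ∈ B.V 0, (if B.accept (B.runTo x v 0 n) then (-1 : ℝ) else 1)) / ((B.V 0).card : ℝ)

/-- The averaged value of the suffix of `B` starting at layer `t`, whose start-vertex
set is `V t`. -/
noncomputable def suffixEval (B : ROBP w n) (t : Fin (n + 1)) (x : Fin n → Bool) : ℝ :=
  (∑ v ∈ B.V t, (if B.accept (B.runTo x v (t : ℕ) n) then (-1 : ℝ) else 1)) /
    ((B.V t).card : ℝ)

/-- `B` is a `(w, ℓ, m)`-ROBP: it can be written as a concatenation of `m` consecutive
blocks, each block boundary layer having at most `2` vertices and each block having at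
most `ℓ` colliding layers. -/
def IsDecomp (B : ROBP w n) (ℓ m : ℕ) : Prop :=
  ∃ cut : Fin (m + 1) → Fin (n + 1),
    Monotone cut ∧ cut 0 = 0 ∧ cut (Fin.last m) = Fin.last n ∧
    (∀ j, (B.V (cut j)).card ≤ 2) ∧
    (∀ j : Fin m,
      Nat.card {i : Fin n //
        (cut j.castSucc : ℕ) ≤ (i : ℕ) ∧ (i : ℕ) < (cut j.succ : ℕ) ∧ B.Colliding i} ≤ ℓ)

end ROBP

/-- `G` is a pseudorandom generator that `ε`-fools the real-valued function `f`. -/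
def fools {r n : ℕ} (G : (Fin r → Bool) → (Fin n → Bool)) (f : (Fin n → Bool) → ℝ)
    (ε : ℝ) : Prop :=
  |uexp f - uexp (fun s => f (G s))| ≤ ε

/-- Expectation of `f` under the distribution with mass function `μ`. -/
noncomputable def dExp {α : Type*} [Fintype α] (μ f : α → ℝ) : ℝ :=
  ∑ x : α, μ x * f x


/-! ### Auxiliary material for Statement 13 -/

/-- The third element of `Fin 3`, different from `a` and `b` when `a ≠ b`. -/
def othr (a b : Fin 3) : Fin 3 := -(a + b)

def pp1 : Fin 3 → Fin 3 | 0 => 1 | 1 => 0 | 2 => 0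
def pp2 : Fin 3 → Fin 3 | 0 => 2 | 1 => 2 | 2 => 1

lemma othr_pp : ∀ c : Fin 3, othr (pp1 c) (pp2 c) = c := by decide
lemma pp_ne : ∀ c : Fin 3, pp1 c ≠ pp2 c := by decide
lemma pp_othr : ∀ a b : Fin 3, a ≠ b →
    (pp1 (othr a b) = a ∧ pp2 (othr a b) = b) ∨ (pp1 (othr a b) = b ∧ pp2 (othr a b) = a) := by
  decide
lemma othr_trans_eq : ∀ (f : Fin 3 → Fin 3) (a b : Fin 3), a ≠ b →
    othr (f (pp1 (othr a b))) (f (pp2 (othr a b))) = othr (f a) (f b) := by decide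
lemma pp_cond : ∀ (f : Fin 3 → Fin 3) (a b z : Fin 3), a ≠ b →
    ((f (pp1 (othr a b)) = z ∧ f (pp2 (othr a b)) = z) ↔ (f a = z ∧ f b = z)) := by decide
lemma collide_aux : ∀ (f : Fin 3 → Fin 3) (a b a' b' : Fin 3),
    a ≠ b → a' ≠ b' → f a ≠ f b → f a' ≠ f b' → othr a b ≠ othr a' b' →
    othr (f a) (f b) = othr (f a') (f b') →
    ∃ w1 w2 : Fin 3, (w1 = a ∨ w1 = b) ∧ (w2 = a' ∨ w2 = b') ∧ w1 ≠ w2 ∧ f w1 = f w2 := by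
  decide

namespace ROBP

theorem runTo_self {w n : ℕ} (B : ROBP w n) (x : Fin n → Bool) (v : Fin w) (i j : ℕ)
    (h : j ≤ i) : B.runTo x v i j = v := by
  rw [runTo]
  simp only [dif_neg (by omega : ¬(i < j ∧ i < n))]

theorem runTo_succ {w n : ℕ} (B : ROBP w n) (x : Fin n → Bool) :
    ∀ (k i : ℕ) (v : Fin w) (j : ℕ), i ≤ j → ∀ (hj : j < n), j - i = k →
    B.runTo x v i (j + 1) = B.trans ⟨j, hj⟩ (x ⟨j, hj⟩) (B.runTo x v i j) := by
  intro k
  induction k with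
  | zero =>
    intro i v j hij hj hk
    have : i = j := by omega
    subst this
    rw [runTo]
    simp only [dif_pos (by omega : i < i + 1 ∧ i < n)]
    rw [runTo_self B x _ (i+1) (i+1) le_rfl, runTo_self B x _ i i le_rfl]
  | succ k ih =>
    intro i v j hij hj hk
    rw [runTo]
    simp only [dif_pos (by omega : i < j + 1 ∧ i < n)]
    rw [ih (i+1) _ j (by omega) hj (by omega)]
    congr 1
    conv_rhs => rw [runTo]
    simp only [dif_pos (by omega : i < j ∧ i < n)]

theorem runTo_congr {w n : ℕ} (B : ROBP w n) (x y : Fin n → Bool) :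
    ∀ (k i : ℕ) (v : Fin w) (j : ℕ), j - i = k →
    (∀ m : Fin n, (m : ℕ) < j → x m = y m) →
    B.runTo x v i j = B.runTo y v i j := by
  intro k
  induction k with
  | zero =>
    intro i v j hk _
    rw [runTo_self B x v i j (by omega), runTo_self B y v i j (by omega)]
  | succ k ih =>
    intro i v j hk hxy
    by_cases h : i < j ∧ i < n
    · rw [runTo, runTo]
      simp only [dif_pos h]
      rw [hxy ⟨i, h.2⟩ h.1]
      exact ih (i+1) _ j (by omega) hxy
    · rw [runTo, runTo]
      simp only [dif_neg h]

theorem runTo_mem {w n : ℕ} (B : ROBP w n) (x : Fin n → Bool) (v : Fin w) (hv : v ∈ B.V 0) :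
    ∀ (j : ℕ) (hj : j ≤ n), B.runTo x v 0 j ∈ B.V ⟨j, by omega⟩ := by
  intro j
  induction j with
  | zero => intro _; rw [runTo_self B x v 0 0 le_rfl]; exact hv
  | succ j ih =>
    intro hj
    rw [runTo_succ B x (j-0) 0 v j (by omega) (by omega) rfl]
    have := B.trans_mem ⟨j, by omega⟩ (x ⟨j, by omega⟩) _ (by
      simpa [Fin.castSucc, Fin.castAdd, Fin.castLE] using ih (by omega))
    simpa [Fin.succ] using this

end ROBP

/-- The vertex sets of the detecting ROBP. -/
def detV {n : ℕ} (B : ROBP 3 n) (v1 v2 : Fin 3) (t : ℕ) (j : Fin (n+1)) : Finset (Fin 3) :=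
  if (j : ℕ) < t then
    Finset.image
      (fun x : Fin n → Bool => othr (B.runTo x v1 0 (j : ℕ)) (B.runTo x v2 0 (j : ℕ)))
      Finset.univ
  else {0, 1}

/-- The transition function of the detecting ROBP. -/
def detTrans {n : ℕ} (B : ROBP 3 n) (t : ℕ) (u : Fin 3) (i : Fin n) (bb : Bool)
    (c : Fin 3) : Fin 3 :=
  if (i : ℕ) + 1 < t then othr (B.trans i bb (pp1 c)) (B.trans i bb (pp2 c))
  else if (i : ℕ) + 1 = t then
    (if B.trans i bb (pp1 c) = u ∧ B.trans i bb (pp2 c) = u then (0 : Fin 3) else 1)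
  else c

/-- If `B` is a width-3 ROBP with two start vertices, at most `ℓ`
colliding layers, and an input on which the two computation paths collide, then the
event "the two paths collide at `u`", where `u` (at layer `t`) is the first vertex at
which a collision can occur, is computable by a width-3 ROBP with at most `ℓ`
colliding layers. -/
theorem first_collision_detectable
    (n ℓ : ℕ) (B : ROBP 3 n) (v1 v2 : Fin 3) (hne : v1 ≠ v2)
    (hV0 : B.V 0 = {v1, v2})
    (hcol : B.collidingCount ≤ ℓ)
    (hex : ∃ (x : Fin n → Bool) (t : ℕ), 0 < t ∧ t ≤ n ∧
      B.runTo x v1 0 t = B.runTo x v2 0 t)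
    (t : ℕ) (u : Fin 3)
    (hfirst : 0 < t ∧ t ≤ n ∧
      (∃ x : Fin n → Bool, B.runTo x v1 0 t = u ∧ B.runTo x v2 0 t = u) ∧
      ∀ (t' : ℕ) (v' : Fin 3), 0 < t' → t' < t →
        ¬ ∃ x : Fin n → Bool, B.runTo x v1 0 t' = v' ∧ B.runTo x v2 0 t' = v') :
    ∃ B' : ROBP 3 n, B'.collidingCount ≤ ℓ ∧
      ∀ x, (B'.accept (B'.run x) = true ↔
        (B.runTo x v1 0 t = u ∧ B.runTo x v2 0 t = u)) := by
  classical
  obtain ⟨ht0, htn, ⟨x0, hx01, hx02⟩, hmin⟩ := hfirst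
  have hv1 : v1 ∈ B.V 0 := by rw [hV0]; simp
  have hv2 : v2 ∈ B.V 0 := by rw [hV0]; simp
  -- the two paths are at distinct vertices at every layer before `t`
  have hdis : ∀ (x : Fin n → Bool) (j : ℕ), j < t →
      B.runTo x v1 0 j ≠ B.runTo x v2 0 j := by
    intro x j hj h
    rcases Nat.eq_zero_or_pos j with h0 | h0
    · subst h0
      rw [ROBP.runTo_self B x v1 0 0 le_rfl, ROBP.runTo_self B x v2 0 0 le_rfl] at h
      exact hne h
    · exact hmin j (B.runTo x v1 0 j) h0 hj ⟨x, rfl, h.symm⟩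
  have ht1n : t - 1 < n := by omega
  -- running one more step after modifying the current coordinate
  have hstep : ∀ (x : Fin n → Bool) (i : ℕ) (hi : i < n) (bb : Bool) (v : Fin 3),
      B.runTo (Function.update x ⟨i, hi⟩ bb) v 0 (i+1)
        = B.trans ⟨i, hi⟩ bb (B.runTo x v 0 i) := by
    intro x i hi bb v
    set y := Function.update x ⟨i, hi⟩ bb with hy
    rw [ROBP.runTo_succ B y (i-0) 0 v i (by omega) hi rfl]
    rw [show y ⟨i, hi⟩ = bb from Function.update_self _ _ _]
    congr 1
    refine ROBP.runTo_congr B y x (i-0) 0 v i rfl ?_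
    intro m hm
    exact Function.update_of_ne (by intro h; rw [h] at hm; simp at hm) _ _
  -- no collision can happen strictly before layer `t`
  have hnocol : ∀ (x : Fin n → Bool) (i : Fin n), (i : ℕ) + 1 < t → ∀ bb : Bool,
      B.trans i bb (B.runTo x v1 0 (i : ℕ)) ≠ B.trans i bb (B.runTo x v2 0 (i : ℕ)) := by
    intro x i hi bb h
    have h1 := hstep x (i : ℕ) i.isLt bb v1
    have h2 := hstep x (i : ℕ) i.isLt bb v2
    refine hmin ((i : ℕ) + 1) (B.trans i bb (B.runTo x v1 0 (i : ℕ))) (by omega) hi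
      ⟨Function.update x ⟨(i : ℕ), i.isLt⟩ bb, ?_, ?_⟩
    · rw [h1]
    · rw [h2, ← h]
  -- layer `t-1` of `B` is colliding
  have hcolB : B.Colliding ⟨t-1, ht1n⟩ := by
    have e1 := ROBP.runTo_succ B x0 (t-1-0) 0 v1 (t-1) (by omega) ht1n rfl
    have e2 := ROBP.runTo_succ B x0 (t-1-0) 0 v2 (t-1) (by omega) ht1n rfl
    rw [show t - 1 + 1 = t by omega] at e1 e2
    refine ⟨x0 ⟨t-1, ht1n⟩, B.runTo x0 v1 0 (t-1), B.runTo x0 v2 0 (t-1), ?_, ?_,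
      hdis x0 (t-1) (by omega), ?_⟩
    · have := ROBP.runTo_mem B x0 v1 hv1 (t-1) (by omega)
      simpa [Fin.castSucc, Fin.castAdd, Fin.castLE] using this
    · have := ROBP.runTo_mem B x0 v2 hv2 (t-1) (by omega)
      simpa [Fin.castSucc, Fin.castAdd, Fin.castLE] using this
    · rw [← e1, ← e2, hx01, hx02]
  -- membership characterization of `detV`
  have hmemV : ∀ (j : Fin (n+1)) (c : Fin 3), (j : ℕ) < t →
      (c ∈ detV B v1 v2 t j ↔
        ∃ x : Fin n → Bool, othr (B.runTo x v1 0 (j : ℕ)) (B.runTo x v2 0 (j : ℕ)) = c) := by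
    intro j c hj
    unfold detV
    rw [if_pos hj]
    simp [Finset.mem_image]
  -- `detTrans` preserves the vertex sets
  have htm : ∀ (i : Fin n) (bb : Bool) (c : Fin 3), c ∈ detV B v1 v2 t i.castSucc →
      detTrans B t u i bb c ∈ detV B v1 v2 t i.succ := by
    intro i bb c hc
    by_cases hi1 : (i : ℕ) + 1 < t
    · have hci : (i.castSucc : ℕ) < t := by simp; omega
      obtain ⟨x, hx⟩ := (hmemV i.castSucc c hci).1 hc
      simp only [Fin.coe_castSucc] at hx
      have hab : B.runTo x v1 0 (i : ℕ) ≠ B.runTo x v2 0 (i : ℕ) := hdis x _ (by omega)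
      rw [(hmemV i.succ _ (by simp [Fin.val_succ]; omega))]
      refine ⟨Function.update x ⟨(i : ℕ), i.isLt⟩ bb, ?_⟩
      rw [Fin.val_succ, hstep x (i : ℕ) i.isLt bb v1, hstep x (i : ℕ) i.isLt bb v2]
      unfold detTrans
      rw [if_pos hi1, ← hx, othr_trans_eq (B.trans i bb) _ _ hab]
    · unfold detV
      rw [if_neg (by simp [Fin.val_succ]; omega)]
      unfold detTrans
      rw [if_neg hi1]
      by_cases hi2 : (i : ℕ) + 1 = t
      · rw [if_pos hi2]
        split <;> simp
      · rw [if_neg hi2]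
        have hct : ¬ ((i.castSucc : ℕ) < t) := by simp; omega
        unfold detV at hc
        rw [if_neg hct] at hc
        exact hc
  -- the detecting ROBP
  have hVne : ∀ j, (detV B v1 v2 t j).Nonempty := by
    intro j
    unfold detV
    split
    · exact Finset.Nonempty.image Finset.univ_nonempty _
    · exact ⟨0, by simp⟩
  have hsm : othr v1 v2 ∈ detV B v1 v2 t 0 := by
    rw [hmemV 0 _ (by simpa using ht0)]
    refine ⟨fun _ => true, ?_⟩
    simp only [Fin.val_zero]
    rw [ROBP.runTo_self B _ v1 0 0 le_rfl, ROBP.runTo_self B _ v2 0 0 le_rfl]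
  set B' : ROBP 3 n :=
    ⟨detV B v1 v2 t, hVne, othr v1 v2, hsm, detTrans B t u, htm, fun c => c == 0⟩
    with hB'def
  have hBV : B'.V = detV B v1 v2 t := rfl
  have hBtrans : B'.trans = detTrans B t u := rfl
  have hBstart : B'.start = othr v1 v2 := rfl
  have hBacc : B'.accept = fun c => c == 0 := rfl
  refine ⟨B', ?_, ?_⟩
  · -- colliding count
    have himp : ∀ i : Fin n, B'.Colliding i → B.Colliding i := by
      intro i hcol'
      obtain ⟨bb, c, c', hc, hc', hcc, heq⟩ := hcol'
      rw [hBV] at hc hc'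
      rw [hBtrans] at heq
      by_cases hi1 : (i : ℕ) + 1 < t
      · -- before the collision layer
        have hci : (i.castSucc : ℕ) < t := by simp; omega
        obtain ⟨x, hx⟩ := (hmemV i.castSucc c hci).1 hc
        obtain ⟨x', hx'⟩ := (hmemV i.castSucc c' hci).1 hc'
        simp only [Fin.coe_castSucc] at hx hx'
        set a := B.runTo x v1 0 (i : ℕ) with ha
        set b := B.runTo x v2 0 (i : ℕ) with hb
        set a' := B.runTo x' v1 0 (i : ℕ) with ha'
        set b' := B.runTo x' v2 0 (i : ℕ) with hb'
        have hab : a ≠ b := hdis x _ (by omega)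
        have hab' : a' ≠ b' := hdis x' _ (by omega)
        have hfab : B.trans i bb a ≠ B.trans i bb b := hnocol x i hi1 bb
        have hfab' : B.trans i bb a' ≠ B.trans i bb b' := hnocol x' i hi1 bb
        unfold detTrans at heq
        rw [if_pos hi1, if_pos hi1, ← hx, ← hx',
          othr_trans_eq (B.trans i bb) _ _ hab, othr_trans_eq (B.trans i bb) _ _ hab'] at heq
        have hoo : othr a b ≠ othr a' b' := by rw [hx, hx']; exact hcc
        obtain ⟨w1, w2, hw1, hw2, hww, hfww⟩ :=
          collide_aux (B.trans i bb) a b a' b' hab hab' hfab hfab' hoo heq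
        have hmem1 : w1 ∈ B.V i.castSucc := by
          rcases hw1 with h | h
          · rw [h, ha]
            have := ROBP.runTo_mem B x v1 hv1 (i : ℕ) (by omega)
            simpa [Fin.castSucc, Fin.castAdd, Fin.castLE] using this
          · rw [h, hb]
            have := ROBP.runTo_mem B x v2 hv2 (i : ℕ) (by omega)
            simpa [Fin.castSucc, Fin.castAdd, Fin.castLE] using this
        have hmem2 : w2 ∈ B.V i.castSucc := by
          rcases hw2 with h | h
          · rw [h, ha']
            have := ROBP.runTo_mem B x' v1 hv1 (i : ℕ) (by omega)
            simpa [Fin.castSucc, Fin.castAdd, Fin.castLE] using this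
          · rw [h, hb']
            have := ROBP.runTo_mem B x' v2 hv2 (i : ℕ) (by omega)
            simpa [Fin.castSucc, Fin.castAdd, Fin.castLE] using this
        exact ⟨bb, w1, w2, hmem1, hmem2, hww, hfww⟩
      · by_cases hi2 : (i : ℕ) + 1 = t
        · have : i = ⟨t-1, ht1n⟩ := Fin.ext (by simp; omega)
          rw [this]
          exact hcolB
        · exfalso
          unfold detTrans at heq
          rw [if_neg hi1, if_neg hi2, if_neg hi1, if_neg hi2] at heq
          exact hcc heq
    unfold ROBP.collidingCount
    refine le_trans ?_ hcol
    exact Nat.card_le_card_of_injective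
      (fun p => ⟨p.1, himp p.1 p.2⟩)
      (fun p q h => Subtype.ext (by simpa using congrArg Subtype.val h))
  · -- correctness
    intro x
    -- the invariant before layer `t`
    have hinv0 : ∀ j : ℕ, j < t →
        B'.runTo x (othr v1 v2) 0 j = othr (B.runTo x v1 0 j) (B.runTo x v2 0 j) := by
      intro j
      induction j with
      | zero =>
        intro _
        rw [ROBP.runTo_self B' x _ 0 0 le_rfl, ROBP.runTo_self B x v1 0 0 le_rfl,
          ROBP.runTo_self B x v2 0 0 le_rfl]
      | succ j ih =>
        intro hj
        have hjn : j < n := by omega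
        rw [ROBP.runTo_succ B' x (j-0) 0 _ j (by omega) hjn rfl, ih (by omega), hBtrans]
        unfold detTrans
        rw [if_pos (by simpa using hj)]
        rw [othr_trans_eq _ _ _ (hdis x j (by omega))]
        rw [ROBP.runTo_succ B x (j-0) 0 v1 j (by omega) hjn rfl,
          ROBP.runTo_succ B x (j-0) 0 v2 j (by omega) hjn rfl]
    -- value at layer `t`
    have hinvT : B'.runTo x (othr v1 v2) 0 t =
        (if B.runTo x v1 0 t = u ∧ B.runTo x v2 0 t = u then (0 : Fin 3) else 1) := by
      have hjn : t - 1 < n := ht1n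
      have e := ROBP.runTo_succ B' x (t-1-0) 0 (othr v1 v2) (t-1) (by omega) hjn rfl
      rw [show t - 1 + 1 = t by omega] at e
      rw [e, hinv0 (t-1) (by omega), hBtrans]
      unfold detTrans
      rw [if_neg (by dsimp only; omega), if_pos (by dsimp only; omega)]
      have e1 := ROBP.runTo_succ B x (t-1-0) 0 v1 (t-1) (by omega) hjn rfl
      have e2 := ROBP.runTo_succ B x (t-1-0) 0 v2 (t-1) (by omega) hjn rfl
      rw [show t - 1 + 1 = t by omega] at e1 e2
      rw [if_congr (pp_cond (B.trans ⟨t-1, hjn⟩ (x ⟨t-1, hjn⟩)) _ _ u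
        (hdis x (t-1) (by omega))) rfl rfl]
      rw [e1, e2]
    -- the value is preserved after layer `t`
    have hinv1 : ∀ j : ℕ, t ≤ j → j ≤ n →
        B'.runTo x (othr v1 v2) 0 j =
          (if B.runTo x v1 0 t = u ∧ B.runTo x v2 0 t = u then (0 : Fin 3) else 1) := by
      intro j
      induction j with
      | zero => intro h _; omega
      | succ j ih =>
        intro hj hjn
        by_cases htj : t ≤ j
        · rw [ROBP.runTo_succ B' x (j-0) 0 _ j (by omega) (by omega) rfl,
            ih htj (by omega), hBtrans]
          unfold detTrans
          rw [if_neg (by dsimp only; omega), if_neg (by dsimp only; omega)]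
        · have : j + 1 = t := by omega
          rw [this]
          exact hinvT
    have hrun : B'.run x =
        (if B.runTo x v1 0 t = u ∧ B.runTo x v2 0 t = u then (0 : Fin 3) else 1) := by
      unfold ROBP.run
      rw [hBstart]
      exact hinv1 n htn le_rfl
    rw [hrun, hBacc]
    by_cases hcond : B.runTo x v1 0 t = u ∧ B.runTo x v2 0 t = u
    · rw [if_pos hcond]
      simpa using hcond
    · rw [if_neg hcond]
      simp only [beq_iff_eq]
      constructor
      · intro h; exact absurd h (by decide)
      · intro h; exact absurd h hcond
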